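/- arXiv:1202.5625 — 3 statements merged into one kernel-verified Lean document; each statement's English description precedes it below -/
import Mathlib

section
/- Let v = (v₀,v₁,v₂) ∈ ℝ³ with |v| = 1 and r := √(v₁² + v₂²) > 0, let u := (−r, v₀v₁/r, v₀v₂/r), and set A := √((√5+1)/2), B := √((√5−1)/2). Define zⱼ := A·vⱼ + i·B·uⱼ ∈ ℂ for j = 0,1,2. Then z₀² + z₁² + z₂² = 1, Im(conj(z₁)·z₂) = 0 (equivalently |z₁ + iz₂| = |z₁ − iz₂|, the vanishing-cycle condition), and z₀ = A·v₀ − i·B·r lies on the ellipse {A·cos θ + i·B·sin θ} with A² − B² = 1, i.e. the ellipse with foci ±1. -/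
open Complex

set_option maxHeartbeats 1600000 in
/-- Let `v = (v₀,v₁,v₂) ∈ ℝ³` be a unit vector with
`r = √(v₁² + v₂²) > 0`, `u = (−r, v₀v₁/r, v₀v₂/r)`, `A = √((√5+1)/2)`,
`B = √((√5−1)/2)`, and `zⱼ = A·vⱼ + i·B·uⱼ`. Then `z₀² + z₁² + z₂² = 1`,
`Im(conj(z₁)·z₂) = 0` (equivalently `|z₁ + iz₂| = |z₁ − iz₂|`, the vanishing-cycle
condition), and `z₀ = A·v₀ − i·B·r` lies on the ellipse `{A·cos θ + i·B·sin θ}` with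
`A² − B² = 1`, i.e. the ellipse with foci `±1`. -/
theorem polterovich_torus_on_ellipse
    (v₀ v₁ v₂ : ℝ) (hv : v₀ ^ 2 + v₁ ^ 2 + v₂ ^ 2 = 1)
    (r : ℝ) (hr : r = Real.sqrt (v₁ ^ 2 + v₂ ^ 2)) (hrpos : 0 < r)
    (u₀ u₁ u₂ : ℝ) (hu₀ : u₀ = -r) (hu₁ : u₁ = v₀ * v₁ / r) (hu₂ : u₂ = v₀ * v₂ / r)
    (A B : ℝ) (hA : A = Real.sqrt ((Real.sqrt 5 + 1) / 2))
    (hB : B = Real.sqrt ((Real.sqrt 5 - 1) / 2))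
    (z₀ z₁ z₂ : ℂ)
    (hz₀ : z₀ = (A * v₀ : ℝ) + I * (B * u₀ : ℝ))
    (hz₁ : z₁ = (A * v₁ : ℝ) + I * (B * u₁ : ℝ))
    (hz₂ : z₂ = (A * v₂ : ℝ) + I * (B * u₂ : ℝ)) :
    z₀ ^ 2 + z₁ ^ 2 + z₂ ^ 2 = 1 ∧
      ((starRingEnd ℂ) z₁ * z₂).im = 0 ∧
      ‖z₁ + I * z₂‖ = ‖z₁ - I * z₂‖ ∧
      z₀ = (A * v₀ : ℝ) - I * (B * r : ℝ) ∧
      A ^ 2 - B ^ 2 = 1 ∧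
      ∃ θ : ℝ, z₀ = (A * Real.cos θ : ℝ) + I * (B * Real.sin θ : ℝ) := by
  have hrne : r ≠ 0 := ne_of_gt hrpos
  have h5 : (1:ℝ) ≤ Real.sqrt 5 := by
    rw [show (1:ℝ) = Real.sqrt 1 by simp]
    exact Real.sqrt_le_sqrt (by norm_num)
  have hA2 : A ^ 2 = (Real.sqrt 5 + 1) / 2 := by
    rw [hA, Real.sq_sqrt (by linarith)]
  have hB2 : B ^ 2 = (Real.sqrt 5 - 1) / 2 := by
    rw [hB, Real.sq_sqrt (by linarith)]
  have h5sq : Real.sqrt 5 ^ 2 = 5 := Real.sq_sqrt (by norm_num)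
  have hAB2 : A ^ 2 * B ^ 2 = 1 := by rw [hA2, hB2]; nlinarith
  have hABd : A ^ 2 - B ^ 2 = 1 := by rw [hA2, hB2]; ring
  have hr2 : r ^ 2 = v₁ ^ 2 + v₂ ^ 2 := by
    rw [hr, Real.sq_sqrt (by positivity)]
  subst hu₀ hu₁ hu₂ hz₀ hz₁ hz₂
  refine ⟨?_, ?_, ?_, ?_, hABd, ?_⟩
  · rw [Complex.ext_iff]
    constructor
    · simp only [pow_two, Complex.add_re, Complex.add_im, Complex.mul_re, Complex.mul_im,
        Complex.ofReal_re, Complex.ofReal_im, Complex.I_re, Complex.I_im, Complex.one_re]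
      field_simp
      linear_combination (A^2*r^2 - B^2*r^2) * hv + r^2 * hABd + B^2*(v₀^2 - r^2) * hr2
    · simp only [pow_two, Complex.add_re, Complex.add_im, Complex.mul_re, Complex.mul_im,
        Complex.ofReal_re, Complex.ofReal_im, Complex.I_re, Complex.I_im, Complex.one_im]
      field_simp
      linear_combination (-2*A*v₀*B*r) * hr2
  · simp only [Complex.mul_im, Complex.conj_re, Complex.conj_im, Complex.add_re,
      Complex.add_im, Complex.mul_re, Complex.ofReal_re, Complex.ofReal_im,
      Complex.I_re, Complex.I_im]
    field_simp
    ring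
  · have hn : Complex.normSq ((((A * v₁ : ℝ) : ℂ) + I * (B * (v₀ * v₁ / r) : ℝ)) + I * (((A * v₂ : ℝ) : ℂ) + I * (B * (v₀ * v₂ / r) : ℝ)))
        = Complex.normSq ((((A * v₁ : ℝ) : ℂ) + I * (B * (v₀ * v₁ / r) : ℝ)) - I * (((A * v₂ : ℝ) : ℂ) + I * (B * (v₀ * v₂ / r) : ℝ))) := by
      simp only [Complex.normSq_apply, Complex.add_re, Complex.add_im, Complex.sub_re,
        Complex.sub_im, Complex.mul_re, Complex.mul_im, Complex.ofReal_re, Complex.ofReal_im,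
        Complex.I_re, Complex.I_im]
      ring
    rw [Complex.norm_def, Complex.norm_def, hn]
  · rw [Complex.ext_iff]
    constructor <;> simp
  · refine ⟨-Real.arccos v₀, ?_⟩
    have hv₀le : v₀ ^ 2 ≤ 1 := by nlinarith [sq_nonneg v₁, sq_nonneg v₂]
    have h1 : -1 ≤ v₀ := by nlinarith
    have h2 : v₀ ≤ 1 := by nlinarith
    have hcos : Real.cos (-Real.arccos v₀) = v₀ := by
      rw [Real.cos_neg, Real.cos_arccos h1 h2]
    have hsin : Real.sin (-Real.arccos v₀) = -r := by
      rw [Real.sin_neg, Real.sin_arccos, show 1 - v₀ ^ 2 = r ^ 2 by nlinarith,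
        Real.sqrt_sq hrpos.le]
    rw [hcos, hsin]
end

section
/- Fix an integer m ≥ 1 and for R > 1 define the monotonicity constant τ(R) = πR² + I(R), where I(R) = (π m R^m / 2) · ∫₀¹ (R^m − cos(2πmt)) / √(1 + R^{2m} − 2R^m cos(2πmt)) dt. Then τ(R) tends to π + m as R tends to 1 from above. -/
open Real Filter

/-- The monotonicity constant `τ(R) = πR² + I(R)` of the matching torus of the
`A_{m-1}` Milnor fibre over the circle of radius `R`. -/
noncomputable def monotonicityConstant (m : ℕ) (R : ℝ) : ℝ :=
  π * R ^ 2 + (π * m * R ^ m / 2) *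
    ∫ t in (0 : ℝ)..1,
      (R ^ m - Real.cos (2 * π * m * t)) /
        Real.sqrt (1 + R ^ (2 * m) - 2 * R ^ m * Real.cos (2 * π * m * t))

private lemma abs_sin_periodic : Function.Periodic (fun x : ℝ => |Real.sin x|) π := by
  intro x
  simp [Real.sin_add_pi]

private lemma integral_abs_sin_aux (m : ℕ) (hm : 1 ≤ m) :
    ∫ t in (0 : ℝ)..1, |Real.sin (π * m * t)| = 2 / π := by
  have hπ : (0 : ℝ) < π := Real.pi_pos
  have hm0 : (0 : ℝ) < (m : ℝ) := by exact_mod_cast hm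
  have hc : (π * m : ℝ) ≠ 0 := by positivity
  have h1 : (∫ t in (0 : ℝ)..1, |Real.sin (π * m * t)|)
      = (π * m)⁻¹ • ∫ x in (π * m * 0)..(π * m * 1), |Real.sin x| :=
    intervalIntegral.integral_comp_mul_left (fun x => |Real.sin x|) hc
  have hint : ∀ t₁ t₂ : ℝ, IntervalIntegrable (fun x => |Real.sin x|)
      MeasureTheory.volume t₁ t₂ := fun t₁ t₂ =>
    (Real.continuous_sin.abs).intervalIntegrable t₁ t₂
  have h2 : (∫ x in (0 : ℝ)..(0 + (m : ℤ) • π), |Real.sin x|)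
      = (m : ℤ) • ∫ x in (0 : ℝ)..(0 + π), |Real.sin x| :=
    abs_sin_periodic.intervalIntegral_add_zsmul_eq (m : ℤ) 0 hint
  have h3 : (∫ x in (0 : ℝ)..π, |Real.sin x|) = 2 := by
    have heq : ∀ x ∈ Set.uIcc (0 : ℝ) π, |Real.sin x| = Real.sin x := by
      intro x hx
      rw [Set.uIcc_of_le hπ.le] at hx
      exact abs_of_nonneg (Real.sin_nonneg_of_nonneg_of_le_pi hx.1 hx.2)
    rw [intervalIntegral.integral_congr heq, integral_sin]
    norm_num
  rw [h1]
  have key : (∫ x in (π * m * 0)..(π * m * 1), |Real.sin x|) = m * 2 := by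
    have e1 : π * (m : ℝ) * 0 = (0 : ℝ) := by ring
    have e2 : π * (m : ℝ) * 1 = 0 + (m : ℤ) • π := by
      rw [zsmul_eq_mul]; push_cast; ring
    rw [e1, e2, h2, zero_add, h3, zsmul_eq_mul]
    push_cast; ring
  rw [key, smul_eq_mul]
  field_simp

private lemma denom_pos {m : ℕ} (hm : 1 ≤ m) {R : ℝ} (hR : 1 < R) (c : ℝ) (hc : c ≤ 1) :
    0 < 1 + R ^ (2 * m) - 2 * R ^ m * c := by
  have hRm : 1 < R ^ m := one_lt_pow₀ hR (by omega)
  have key : 1 + R ^ (2 * m) - 2 * R ^ m * c = (R ^ m - 1) ^ 2 + 2 * R ^ m * (1 - c) := by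
    rw [two_mul m, pow_add]; ring
  rw [key]
  have h1 : 0 < R ^ m - 1 := by linarith
  have h2 : 0 ≤ 1 - c := by linarith
  nlinarith

/-- For `m ≥ 1`, the monotonicity constant `τ(R) = πR² + I(R)`
tends to `π + m` as `R` tends to `1` from above. -/
theorem monotonicityConstant_tendsto (m : ℕ) (hm : 1 ≤ m) :
    Tendsto (monotonicityConstant m) (nhdsWithin 1 (Set.Ioi 1)) (nhds (π + m)) := by
  have hπ : (0 : ℝ) < π := Real.pi_pos
  have hm0 : (0 : ℝ) < (m : ℝ) := by exact_mod_cast hm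
  set F : ℝ → ℝ → ℝ := fun R t =>
    (R ^ m - Real.cos (2 * π * m * t)) /
      Real.sqrt (1 + R ^ (2 * m) - 2 * R ^ m * Real.cos (2 * π * m * t)) with hF
  -- Step 1: the integral tends to ∫ |sin (π m t)| = 2/π
  have hev : ∀ᶠ R in nhdsWithin (1:ℝ) (Set.Ioi 1), (1:ℝ) < R :=
    eventually_mem_nhdsWithin
  have hInt : Tendsto (fun R => ∫ t in (0:ℝ)..1, F R t)
      (nhdsWithin 1 (Set.Ioi 1)) (nhds (∫ t in (0:ℝ)..1, |Real.sin (π * m * t)|)) := by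
    apply intervalIntegral.tendsto_integral_filter_of_dominated_convergence
      (fun _ => (1 : ℝ))
    · -- measurability
      filter_upwards [hev] with R hR
      have hcont : Continuous (F R) := by
        apply Continuous.div
        · continuity
        · continuity
        · intro t
          have := denom_pos hm hR (Real.cos (2 * π * m * t)) (Real.cos_le_one _)
          exact (Real.sqrt_pos.mpr this).ne'
      exact hcont.aestronglyMeasurable
    · -- bound
      filter_upwards [hev] with R hR
      apply Filter.Eventually.of_forall
      intro t _
      have hd := denom_pos hm hR (Real.cos (2 * π * m * t)) (Real.cos_le_one _)
      have hRm : 1 < R ^ m := one_lt_pow₀ hR (by omega)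
      have hnum : 0 ≤ R ^ m - Real.cos (2 * π * m * t) := by
        have := Real.cos_le_one (2 * π * m * t); linarith
      have hsq : R ^ m - Real.cos (2 * π * m * t)
          ≤ Real.sqrt (1 + R ^ (2 * m) - 2 * R ^ m * Real.cos (2 * π * m * t)) := by
        rw [show (1 + R ^ (2 * m) - 2 * R ^ m * Real.cos (2 * π * m * t))
            = (R ^ m - Real.cos (2 * π * m * t)) ^ 2
              + (1 - Real.cos (2 * π * m * t) ^ 2) by rw [two_mul m, pow_add]; ring]
        have h2 : 0 ≤ 1 - Real.cos (2 * π * m * t) ^ 2 := by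
          nlinarith [Real.neg_one_le_cos (2 * π * m * t), Real.cos_le_one (2 * π * m * t)]
        calc R ^ m - Real.cos (2 * π * m * t)
            = Real.sqrt ((R ^ m - Real.cos (2 * π * m * t)) ^ 2) :=
              (Real.sqrt_sq hnum).symm
          _ ≤ _ := Real.sqrt_le_sqrt (by linarith)
      rw [Real.norm_eq_abs, abs_of_nonneg (div_nonneg hnum (Real.sqrt_nonneg _))]
      exact div_le_one_of_le₀ hsq (Real.sqrt_nonneg _)
    · exact intervalIntegrable_const
    · -- pointwise a.e. limit
      have hS : MeasureTheory.volume {t : ℝ | Real.cos (2 * π * m * t) = 1} = 0 := by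
        apply Set.Countable.measure_zero
        have : {t : ℝ | Real.cos (2 * π * m * t) = 1}
            ⊆ Set.range (fun n : ℤ => (n : ℝ) / m) := by
          intro t ht
          simp only [Set.mem_setOf_eq] at ht
          rw [Real.cos_eq_one_iff] at ht
          obtain ⟨n, hn⟩ := ht
          refine ⟨n, ?_⟩
          have h2π : (2 * π : ℝ) ≠ 0 := by positivity
          have hmne : ((m : ℝ)) ≠ 0 := hm0.ne'
          have hn' : (n : ℝ) = (m : ℝ) * t := by
            have h : (n : ℝ) * (2 * π) = ((m : ℝ) * t) * (2 * π) := by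
              rw [hn]; ring
            exact mul_right_cancel₀ h2π h
          show (n : ℝ) / m = t
          rw [div_eq_iff hmne, hn']; ring
        exact Set.Countable.mono this (Set.countable_range _)
      have hae : ∀ᵐ t ∂(MeasureTheory.volume : MeasureTheory.Measure ℝ),
          Real.cos (2 * π * m * t) ≠ 1 := by
        rw [MeasureTheory.ae_iff]
        simpa using hS
      filter_upwards [hae] with t ht _
      set c := Real.cos (2 * π * m * t) with hcdef
      have hc1 : c ≤ 1 := Real.cos_le_one _
      have hclt : c < 1 := lt_of_le_of_ne hc1 ht
      have hcont : ContinuousAt (fun R : ℝ => F R t) 1 := by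
        apply ContinuousAt.div
        · fun_prop
        · apply Real.continuous_sqrt.continuousAt.comp
          fun_prop
        · have : (1:ℝ) + 1 ^ (2 * m) - 2 * 1 ^ m * c = 2 - 2 * c := by simp; ring
          rw [this]
          have : 0 < 2 - 2 * c := by linarith
          exact (Real.sqrt_pos.mpr this).ne'
      have ha : (0:ℝ) < 1 - c := by linarith
      have hval : F 1 t = |Real.sin (π * m * t)| := by
        have h1 : F 1 t = (1 - c) / Real.sqrt ((1 - c) * 2) := by
          simp only [hF, one_pow, ← hcdef]
          rw [show (1:ℝ) + 1 - 2 * 1 * c = (1 - c) * 2 by ring]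
        rw [h1]
        have habs : |Real.sin (π * m * t)| = Real.sqrt ((1 - c) / 2) := by
          have he : π * m * t = (2 * π * m * t) / 2 := by ring
          rw [he, Real.abs_sin_half, hcdef]
        rw [habs]
        have hd : 0 < Real.sqrt ((1 - c) * 2) := Real.sqrt_pos.mpr (by linarith)
        rw [div_eq_iff hd.ne', ← Real.sqrt_mul (by positivity : (0:ℝ) ≤ (1 - c) / 2),
          show (1 - c) / 2 * ((1 - c) * 2) = (1 - c) ^ 2 by ring, Real.sqrt_sq ha.le]
      rw [← hval]
      exact hcont.tendsto.mono_left nhdsWithin_le_nhds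
  rw [integral_abs_sin_aux m hm] at hInt
  -- Step 2: combine limits
  have hpoly : Tendsto (fun R : ℝ => π * R ^ 2) (nhdsWithin 1 (Set.Ioi 1)) (nhds π) := by
    have : ContinuousAt (fun R : ℝ => π * R ^ 2) 1 := by fun_prop
    have h := this.tendsto.mono_left (nhdsWithin_le_nhds (s := Set.Ioi (1:ℝ)))
    simpa using h
  have hcoef : Tendsto (fun R : ℝ => π * m * R ^ m / 2)
      (nhdsWithin 1 (Set.Ioi 1)) (nhds (π * m / 2)) := by
    have : ContinuousAt (fun R : ℝ => π * m * R ^ m / 2) 1 := by fun_prop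
    have h := this.tendsto.mono_left (nhdsWithin_le_nhds (s := Set.Ioi (1:ℝ)))
    simpa using h
  have hfinal := hpoly.add (hcoef.mul hInt)
  have : π + π * m / 2 * (2 / π) = π + m := by field_simp
  rw [this] at hfinal
  exact hfinal
end

section
/- Fix an integer m ≥ 1 and for R > 1 define τ(R) = πR² + (π m R^m / 2) · ∫₀¹ (R^m − cos(2πmt)) / √(1 + R^{2m} − 2R^m cos(2πmt)) dt. Then τ is strictly increasing on (1,∞) and tends to +∞ as R → ∞; consequently, every real number c > π + m is attained as c = τ(R) for a unique R > 1. -/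
open Real Filter

namespace MCAux

open MeasureTheory intervalIntegral

/-- The integrand. -/
noncomputable def f (m : ℕ) (R t : ℝ) : ℝ :=
  (R ^ m - Real.cos (2 * π * m * t)) /
    Real.sqrt (1 + R ^ (2 * m) - 2 * R ^ m * Real.cos (2 * π * m * t))

lemma mc_eq (m : ℕ) (R : ℝ) :
    monotonicityConstant m R
      = π * R ^ 2 + (π * m * R ^ m / 2) * ∫ t in (0 : ℝ)..1, f m R t := rfl

lemma denom_eq (m : ℕ) (R t : ℝ) :
    1 + R ^ (2 * m) - 2 * R ^ m * Real.cos (2 * π * m * t)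
      = (R ^ m - Real.cos (2 * π * m * t)) ^ 2 + (1 - Real.cos (2 * π * m * t) ^ 2) := by
  rw [mul_comm 2 m, pow_mul]; ring

lemma frac_nonneg {a b : ℝ} (ha : 0 ≤ a) : 0 ≤ a / Real.sqrt (a ^ 2 + b) :=
  div_nonneg ha (Real.sqrt_nonneg _)

lemma frac_le_one {a b : ℝ} (ha : 0 ≤ a) (hb : 0 ≤ b) :
    a / Real.sqrt (a ^ 2 + b) ≤ 1 := by
  rcases eq_or_lt_of_le (Real.sqrt_nonneg (a ^ 2 + b)) with h | h
  · rw [← h]; simp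
  · rw [div_le_one h]
    calc a = Real.sqrt (a ^ 2) := (Real.sqrt_sq ha).symm
    _ ≤ Real.sqrt (a ^ 2 + b) := Real.sqrt_le_sqrt (by linarith)

lemma frac_mono {a₁ a₂ b : ℝ} (ha₁ : 0 ≤ a₁) (h12 : a₁ ≤ a₂) (hb : 0 ≤ b) :
    a₁ / Real.sqrt (a₁ ^ 2 + b) ≤ a₂ / Real.sqrt (a₂ ^ 2 + b) := by
  by_cases h0 : a₁ = 0
  · subst h0
    simp only [zero_div, ne_eq, OfNat.ofNat_ne_zero, not_false_eq_true, zero_pow, zero_add]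
    exact frac_nonneg h12
  · have ha₁' : 0 < a₁ := lt_of_le_of_ne ha₁ (Ne.symm h0)
    have ha₂' : 0 < a₂ := lt_of_lt_of_le ha₁' h12
    have hd₁ : 0 < Real.sqrt (a₁ ^ 2 + b) := Real.sqrt_pos.mpr (by nlinarith)
    have hd₂ : 0 < Real.sqrt (a₂ ^ 2 + b) := Real.sqrt_pos.mpr (by nlinarith)
    rw [div_le_div_iff₀ hd₁ hd₂]
    have h1 : a₁ * Real.sqrt (a₂ ^ 2 + b) = Real.sqrt (a₁ ^ 2 * (a₂ ^ 2 + b)) := by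
      rw [Real.sqrt_mul (by positivity), Real.sqrt_sq ha₁]
    have h2 : a₂ * Real.sqrt (a₁ ^ 2 + b) = Real.sqrt (a₂ ^ 2 * (a₁ ^ 2 + b)) := by
      rw [Real.sqrt_mul (by positivity), Real.sqrt_sq ha₂'.le]
    rw [h1, h2]
    refine Real.sqrt_le_sqrt ?_
    nlinarith [mul_le_mul_of_nonneg_left (by nlinarith : a₁ ^ 2 ≤ a₂ ^ 2) hb]

lemma a_nonneg (m : ℕ) {R : ℝ} (hR : 1 ≤ R) (t : ℝ) :
    0 ≤ R ^ m - Real.cos (2 * π * m * t) := by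
  have h1 : (1 : ℝ) ≤ R ^ m := one_le_pow₀ hR
  have h2 := Real.cos_le_one (2 * π * m * t)
  linarith

lemma b_nonneg (m : ℕ) (t : ℝ) : 0 ≤ 1 - Real.cos (2 * π * m * t) ^ 2 := by
  have h1 := Real.cos_le_one (2 * π * m * t)
  have h2 := Real.neg_one_le_cos (2 * π * m * t)
  nlinarith

lemma f_nonneg (m : ℕ) {R : ℝ} (hR : 1 ≤ R) (t : ℝ) : 0 ≤ f m R t := by
  rw [f, denom_eq]
  exact frac_nonneg (a_nonneg m hR t)

lemma f_le_one (m : ℕ) {R : ℝ} (hR : 1 ≤ R) (t : ℝ) : f m R t ≤ 1 := by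
  rw [f, denom_eq]
  exact frac_le_one (a_nonneg m hR t) (b_nonneg m t)

lemma f_mono (m : ℕ) {R₁ R₂ : ℝ} (hR₁ : 1 ≤ R₁) (h12 : R₁ ≤ R₂) (t : ℝ) :
    f m R₁ t ≤ f m R₂ t := by
  rw [f, f, denom_eq, denom_eq]
  have hpow : R₁ ^ m ≤ R₂ ^ m := pow_le_pow_left₀ (by linarith) h12 m
  exact frac_mono (a_nonneg m hR₁ t) (by linarith) (b_nonneg m t)

lemma f_meas (m : ℕ) (R : ℝ) : Measurable (f m R) := by
  apply Measurable.div
  · fun_prop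
  · fun_prop

lemma f_int (m : ℕ) {R : ℝ} (hR : 1 ≤ R) : IntervalIntegrable (f m R) volume 0 1 := by
  rw [intervalIntegrable_iff, Set.uIoc_of_le zero_le_one]
  refine Integrable.mono' (g := fun _ => (1 : ℝ)) ?_ ((f_meas m R).aestronglyMeasurable) ?_
  · exact integrable_const 1
  · filter_upwards with t
    rw [Real.norm_eq_abs, abs_of_nonneg (f_nonneg m hR t)]
    exact f_le_one m hR t

lemma G_nonneg (m : ℕ) {R : ℝ} (hR : 1 ≤ R) :
    0 ≤ ∫ t in (0 : ℝ)..1, f m R t :=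
  intervalIntegral.integral_nonneg zero_le_one (fun t _ => f_nonneg m hR t)

lemma G_mono (m : ℕ) {R₁ R₂ : ℝ} (hR₁ : 1 ≤ R₁) (h12 : R₁ ≤ R₂) :
    (∫ t in (0 : ℝ)..1, f m R₁ t) ≤ ∫ t in (0 : ℝ)..1, f m R₂ t :=
  intervalIntegral.integral_mono_on zero_le_one (f_int m hR₁)
    (f_int m (le_trans hR₁ h12)) (fun t _ => f_mono m hR₁ h12 t)

lemma badSet_null (m : ℕ) (hm : 1 ≤ m) :
    volume {t : ℝ | Real.cos (2 * π * m * t) = 1} = 0 := by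
  refine measure_mono_null ?_
    ((Set.countable_range (fun n : ℤ => (n : ℝ) / m)).measure_zero _)
  intro t ht
  rw [Set.mem_setOf_eq, Real.cos_eq_one_iff] at ht
  obtain ⟨n, hn⟩ := ht
  have hm0 : ((m : ℝ)) ≠ 0 := by
    exact_mod_cast Nat.pos_of_ne_zero (by omega) |>.ne'
  have h2π : (2 : ℝ) * π ≠ 0 := by
    have := Real.pi_ne_zero; positivity
  have hnm : (n : ℝ) = m * t := by
    apply mul_right_cancel₀ h2π
    linear_combination hn
  refine ⟨n, ?_⟩
  show (n : ℝ) / m = t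
  rw [hnm]
  exact mul_div_cancel_left₀ t hm0

lemma ae_cos_ne_one (m : ℕ) (hm : 1 ≤ m) :
    ∀ᵐ t : ℝ, Real.cos (2 * π * m * t) ≠ 1 := by
  rw [ae_iff]
  convert badSet_null m hm using 2
  simp

lemma G_contOn (m : ℕ) (hm : 1 ≤ m) :
    ContinuousOn (fun R => ∫ t in (0 : ℝ)..1, f m R t) (Set.Ici 1) := by
  intro R₀ hR₀
  refine intervalIntegral.tendsto_integral_filter_of_dominated_convergence
    (bound := fun _ => (1 : ℝ)) ?_ ?_ ?_ ?_
  · exact Eventually.of_forall fun R => (f_meas m R).aestronglyMeasurable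
  · filter_upwards [self_mem_nhdsWithin] with R hR
    filter_upwards with t _
    rw [Real.norm_eq_abs, abs_of_nonneg (f_nonneg m hR t)]
    exact f_le_one m hR t
  · exact intervalIntegrable_const
  · filter_upwards [ae_cos_ne_one m hm] with t ht _
    have hc1 : Real.cos (2 * π * m * t) < 1 :=
      lt_of_le_of_ne (Real.cos_le_one _) ht
    have hR0 : (1 : ℝ) ≤ R₀ := hR₀
    have hDpos : 0 < 1 + R₀ ^ (2 * m) - 2 * R₀ ^ m * Real.cos (2 * π * m * t) := by
      rw [denom_eq]
      have ha := a_nonneg m hR0 t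
      have hb := b_nonneg m t
      have h1 : (1 : ℝ) ≤ R₀ ^ m := one_le_pow₀ hR0
      nlinarith
    have hcont : ContinuousAt (fun R => f m R t) R₀ := by
      apply ContinuousAt.div
      · fun_prop
      · exact (Real.continuous_sqrt.continuousAt).comp (by fun_prop)
      · exact (Real.sqrt_pos.mpr hDpos).ne'
    exact hcont.tendsto.mono_left nhdsWithin_le_nhds

lemma tau_contOn (m : ℕ) (hm : 1 ≤ m) :
    ContinuousOn (monotonicityConstant m) (Set.Ici 1) := by
  have h : monotonicityConstant m
      = fun R => π * R ^ 2 + (π * m * R ^ m / 2) * ∫ t in (0 : ℝ)..1, f m R t := rfl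
  rw [h]
  refine ContinuousOn.add (by fun_prop) (ContinuousOn.mul (by fun_prop) (G_contOn m hm))

lemma f_one (m : ℕ) (t : ℝ) : f m 1 t = |Real.sin (π * m * t)| := by
  have key : 2 * π * (m : ℝ) * t = 2 * (π * m * t) := by ring
  rw [f]
  simp only [one_pow, key]
  set y := π * (m : ℝ) * t with hy
  have hpyth := Real.sin_sq_add_cos_sq y
  have h1 : 1 - Real.cos (2 * y) = 2 * Real.sin y ^ 2 := by
    rw [Real.cos_two_mul]; nlinarith
  have h2 : 1 + 1 - 2 * 1 * Real.cos (2 * y) = (2 * |Real.sin y|) ^ 2 := by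
    have := sq_abs (Real.sin y)
    rw [Real.cos_two_mul]; nlinarith
  rw [h2, Real.sqrt_sq (by positivity), h1]
  rcases eq_or_ne (Real.sin y) 0 with h | h
  · simp [h]
  · have habs : |Real.sin y| ≠ 0 := abs_ne_zero.mpr h
    rw [div_eq_iff (by positivity : (2 : ℝ) * |Real.sin y| ≠ 0), ← sq_abs]
    ring

lemma abs_sin_pi_periodic : Function.Periodic (fun y : ℝ => |Real.sin (π * y)|) 1 := by
  intro y
  have : π * (y + 1) = π * y + π := by ring
  simp only [this, Real.sin_add_pi, abs_neg]

lemma integral_abs_sin_pi : (∫ y in (0 : ℝ)..1, |Real.sin (π * y)|) = 2 / π := by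
  have h1 : (∫ y in (0 : ℝ)..1, |Real.sin (π * y)|) = ∫ y in (0 : ℝ)..1, Real.sin (π * y) := by
    refine intervalIntegral.integral_congr fun y hy => ?_
    rw [Set.uIcc_of_le zero_le_one] at hy
    refine abs_of_nonneg (Real.sin_nonneg_of_nonneg_of_le_pi ?_ ?_)
    · exact mul_nonneg Real.pi_pos.le hy.1
    · nlinarith [Real.pi_pos, hy.2]
  rw [h1]
  have h2 : (∫ y in (0 : ℝ)..1, Real.sin (π * y))
      = π⁻¹ • ∫ y in (π * 0)..(π * 1), Real.sin y :=
    intervalIntegral.integral_comp_mul_left Real.sin Real.pi_ne_zero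
  rw [h2, integral_sin]
  rw [mul_zero, mul_one, Real.cos_zero, Real.cos_pi, smul_eq_mul]
  rw [eq_div_iff Real.pi_ne_zero]
  field_simp
  norm_num

lemma G_one (m : ℕ) (hm : 1 ≤ m) :
    (∫ t in (0 : ℝ)..1, f m 1 t) = 2 / π := by
  have hm0 : ((m : ℝ)) ≠ 0 := by exact_mod_cast Nat.pos_of_ne_zero (by omega) |>.ne'
  have h0 : (∫ t in (0 : ℝ)..1, f m 1 t)
      = ∫ t in (0 : ℝ)..1, (fun y => |Real.sin (π * y)|) ((m : ℝ) * t) := by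
    refine intervalIntegral.integral_congr fun t _ => ?_
    rw [f_one]
    have : π * (m : ℝ) * t = π * ((m : ℝ) * t) := by ring
    rw [this]
  have hcm := intervalIntegral.integral_comp_mul_left (a := (0:ℝ)) (b := (1:ℝ))
    (fun y => |Real.sin (π * y)|) hm0
  rw [h0, hcm]
  have hper := abs_sin_pi_periodic
  have hint : ∀ t₁ t₂ : ℝ, IntervalIntegrable (fun y : ℝ => |Real.sin (π * y)|)
      MeasureSpace.volume t₁ t₂ := fun t₁ t₂ => (by fun_prop : Continuous
        (fun y : ℝ => |Real.sin (π * y)|)).intervalIntegrable t₁ t₂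
  have hmul : (∫ y in ((m : ℝ) * 0)..((m : ℝ) * 1), |Real.sin (π * y)|)
      = (m : ℤ) • ∫ y in (0 : ℝ)..(0 + 1), |Real.sin (π * y)| := by
    have := hper.intervalIntegral_add_zsmul_eq (m : ℤ) 0 hint
    simpa using this
  rw [hmul]
  simp only [zero_add, integral_abs_sin_pi, zsmul_eq_mul, Int.cast_natCast, smul_eq_mul]
  field_simp

lemma tau_one (m : ℕ) (hm : 1 ≤ m) : monotonicityConstant m 1 = π + m := by
  rw [mc_eq, G_one m hm]
  simp only [one_pow, mul_one]
  field_simp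

lemma tau_strictMonoOn (m : ℕ) (hm : 1 ≤ m) :
    StrictMonoOn (monotonicityConstant m) (Set.Ici 1) := by
  intro R₁ h₁ R₂ h₂ h12
  have h1R : (1 : ℝ) ≤ R₁ := h₁
  rw [mc_eq, mc_eq]
  have hsq : π * R₁ ^ 2 < π * R₂ ^ 2 := by
    have : R₁ ^ 2 < R₂ ^ 2 := by nlinarith
    exact mul_lt_mul_of_pos_left this Real.pi_pos
  have hpow : R₁ ^ m ≤ R₂ ^ m := pow_le_pow_left₀ (by linarith) h12.le m
  have hcoef : π * m * R₁ ^ m / 2 ≤ π * m * R₂ ^ m / 2 := by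
    have hπm : 0 ≤ π * m := by positivity
    have := mul_le_mul_of_nonneg_left hpow hπm
    linarith
  have hle : (π * m * R₁ ^ m / 2) * ∫ t in (0 : ℝ)..1, f m R₁ t
      ≤ (π * m * R₂ ^ m / 2) * ∫ t in (0 : ℝ)..1, f m R₂ t :=
    mul_le_mul hcoef (G_mono m h1R h12.le) (G_nonneg m h1R)
      (div_nonneg (mul_nonneg (by positivity) (pow_nonneg (by linarith) m)) (by norm_num))
  linarith

lemma tau_tendsto (m : ℕ) (hm : 1 ≤ m) :
    Tendsto (monotonicityConstant m) atTop atTop := by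
  have h1 : Tendsto (fun R : ℝ => π * R ^ 2) atTop atTop :=
    (tendsto_pow_atTop two_ne_zero).const_mul_atTop Real.pi_pos
  refine tendsto_atTop_mono' atTop ?_ h1
  filter_upwards [eventually_ge_atTop (1 : ℝ)] with R hR
  rw [mc_eq]
  have h2 : 0 ≤ (π * m * R ^ m / 2) * ∫ t in (0 : ℝ)..1, f m R t :=
    mul_nonneg (div_nonneg (mul_nonneg (by positivity) (pow_nonneg (by linarith) m))
      (by norm_num)) (G_nonneg m hR)
  linarith

end MCAux

/-- For `m ≥ 1`, the monotonicity constant `τ` is strictly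
increasing on `(1,∞)` and tends to `+∞` as `R → ∞`; consequently every real
`c > π + m` is attained as `c = τ(R)` for a unique `R > 1`. -/
theorem monotonicityConstant_strictMono (m : ℕ) (hm : 1 ≤ m) :
    StrictMonoOn (monotonicityConstant m) (Set.Ioi 1) ∧
      Tendsto (monotonicityConstant m) atTop atTop ∧
      ∀ c : ℝ, π + m < c →
        ∃! R : ℝ, R ∈ Set.Ioi (1 : ℝ) ∧ monotonicityConstant m R = c := by
  have hsm := MCAux.tau_strictMonoOn m hm
  refine ⟨hsm.mono (Set.Ioi_subset_Ici le_rfl), MCAux.tau_tendsto m hm, ?_⟩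
  intro c hc
  obtain ⟨B, hB1, hBc⟩ : ∃ B : ℝ, 1 ≤ B ∧ c < monotonicityConstant m B := by
    obtain ⟨B, hB⟩ := (((MCAux.tau_tendsto m hm).eventually_gt_atTop c).and
      (eventually_ge_atTop (1 : ℝ))).exists
    exact ⟨B, hB.2, hB.1⟩
  have hcont : ContinuousOn (monotonicityConstant m) (Set.Icc 1 B) :=
    (MCAux.tau_contOn m hm).mono Set.Icc_subset_Ici_self
  have hcmem : c ∈ Set.Ioo (monotonicityConstant m 1) (monotonicityConstant m B) := by
    rw [MCAux.tau_one m hm]; exact ⟨hc, hBc⟩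
  obtain ⟨R, hR, hRc⟩ := intermediate_value_Ioo hB1 hcont hcmem
  refine ⟨R, ⟨hR.1, hRc⟩, ?_⟩
  rintro y ⟨hy1, hyc⟩
  exact hsm.injOn (Set.mem_Ici.mpr (le_of_lt hy1)) (Set.mem_Ici.mpr (le_of_lt hR.1))
    (hyc.trans hRc.symm)
end
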